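/- arXiv:1203.2996 — 7 statements merged into one kernel-verified Lean document; each statement's English description precedes it below -/
import Mathlib

section
/- Let N ∈ ℕ with N ≥ 1, let S be a subtree of the N-ary rooted tree, and let m be an integer with 1 ≤ m ≤ N. Suppose that for every m-regular subtree R of the N-ary tree, the set S ∩ R is infinite. Then there exists an (N−m+1)-regular subtree of the N-ary tree that is contained in S. -/
/-- A subtree of the `N`-ary rooted tree (vertices are lists over `Fin N`,
the root is the empty list): a set of vertices containing the root and
closed under taking prefixes. -/
def IsSubtree {N : ℕ} (S : Set (List (Fin N))) : Prop :=
  [] ∈ S ∧ ∀ σ ∈ S, ∀ τ : List (Fin N), τ <+: σ → τ ∈ S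

/-- An `m`-regular subtree: every vertex has exactly `m` one-step extensions
in the tree. -/
def IsRegularSubtree {N : ℕ} (m : ℕ) (R : Set (List (Fin N))) : Prop :=
  IsSubtree R ∧ ∀ σ ∈ R, {i : Fin N | σ ++ [i] ∈ R}.ncard = m

/- ----------------- auxiliary material ----------------- -/

lemma list_prefix_concat {α} {l σ : List α} {i : α} (h : l <+: σ ++ [i]) :
    l <+: σ ∨ l = σ ++ [i] := by
  rcases le_or_gt l.length σ.length with hl | hl
  · exact Or.inl (List.prefix_of_prefix_length_le h (List.prefix_append _ _) hl)
  · right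
    have := h.length_le
    simp at this
    exact h.eq_of_length (by simp; omega)

/-- The subtree of `S` rooted at `σ`. -/
def TreeShift {N : ℕ} (S : Set (List (Fin N))) (σ : List (Fin N)) : Set (List (Fin N)) :=
  {τ | σ ++ τ ∈ S}

/-- `σ` is good if the subtree of `S` above `σ` meets every `m`-regular
subtree infinitely. -/
def TreeGood {N : ℕ} (S : Set (List (Fin N))) (m : ℕ) (σ : List (Fin N)) : Prop :=
  ∀ R : Set (List (Fin N)), IsRegularSubtree m R → (TreeShift S σ ∩ R).Infinite

lemma ncard_fin_lt {N m : ℕ} (hmN : m ≤ N) : ({i : Fin N | (i : ℕ) < m}).ncard = m := by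
  have e : {i : Fin N | (i : ℕ) < m} ≃ Fin m :=
    ⟨fun x => ⟨x.1, x.2⟩, fun j => ⟨⟨j, lt_of_lt_of_le j.2 hmN⟩, j.2⟩,
      fun _ => rfl, fun _ => rfl⟩
  rw [← Nat.card_coe_set_eq, Nat.card_congr e, Nat.card_eq_fintype_card, Fintype.card_fin]

lemma full_regular {N m : ℕ} (hmN : m ≤ N) :
    IsRegularSubtree m {σ : List (Fin N) | ∀ x ∈ σ, (x : ℕ) < m} := by
  refine ⟨⟨by simp, fun σ hσ τ hτ x hx => hσ x (hτ.subset hx)⟩, fun σ hσ => ?_⟩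
  have : {i : Fin N | σ ++ [i] ∈ {σ : List (Fin N) | ∀ x ∈ σ, (x : ℕ) < m}}
      = {i : Fin N | (i : ℕ) < m} := by
    ext i
    simp only [Set.mem_setOf_eq, List.mem_append, List.mem_singleton]
    constructor
    · intro h; exact h i (Or.inr rfl)
    · rintro h x (hx | rfl)
      · exact hσ x hx
      · exact h
  rw [this, ncard_fin_lt hmN]

lemma good_mem {N m : ℕ} (hmN : m ≤ N) {S : Set (List (Fin N))} (hS : IsSubtree S)
    {σ : List (Fin N)} (h : TreeGood S m σ) : σ ∈ S := by
  obtain ⟨τ, hτ, -⟩ := (h _ (full_regular hmN)).nonempty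
  exact hS.2 _ hτ σ ⟨τ, rfl⟩

lemma good_children {N m : ℕ} (hm : 1 ≤ m) (hmN : m ≤ N) (S : Set (List (Fin N)))
    (σ : List (Fin N)) (h : TreeGood S m σ) :
    N - m + 1 ≤ {i : Fin N | TreeGood S m (σ ++ [i])}.ncard := by
  classical
  set G := {i : Fin N | TreeGood S m (σ ++ [i])} with hG
  have hcompl : Gᶜ.ncard ≤ m - 1 := by
    by_contra hc
    push_neg at hc
    obtain ⟨I, hIsub, hIcard⟩ := Set.exists_subset_card_eq (show m ≤ Gᶜ.ncard by omega)
    have hbad : ∀ i ∈ I, ∃ R, IsRegularSubtree m R ∧ (TreeShift S (σ ++ [i]) ∩ R).Finite := by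
      intro i hi
      have h2 : ¬ TreeGood S m (σ ++ [i]) := hIsub hi
      unfold TreeGood at h2
      push_neg at h2
      obtain ⟨R, hR, hfin⟩ := h2
      exact ⟨R, hR, hfin⟩
    choose f hf1 hf2 using hbad
    let g : Fin N → Set (List (Fin N)) := fun i => if hi : i ∈ I then f i hi else ∅
    have hg1 : ∀ i ∈ I, IsRegularSubtree m (g i) := by
      intro i hi; simp only [g, dif_pos hi]; exact hf1 i hi
    have hg2 : ∀ i ∈ I, (TreeShift S (σ ++ [i]) ∩ g i).Finite := by
      intro i hi; simp only [g, dif_pos hi]; exact hf2 i hi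
    set R : Set (List (Fin N)) :=
      insert [] {l | ∃ i ∈ I, ∃ τ ∈ g i, l = i :: τ} with hRdef
    have hR : IsRegularSubtree m R := by
      constructor
      · refine ⟨Set.mem_insert _ _, ?_⟩
        rintro l hl τ hτ
        rcases hl with rfl | ⟨i, hi, τ', hτ', rfl⟩
        · rw [List.prefix_nil] at hτ; subst hτ; exact Set.mem_insert _ _
        · cases τ with
          | nil => exact Set.mem_insert _ _
          | cons j τ'' =>
            rw [List.cons_prefix_cons] at hτ
            obtain ⟨rfl, hpre⟩ := hτ
            exact Set.mem_insert_of_mem _ ⟨j, hi, τ'', (hg1 j hi).1.2 _ hτ' _ hpre, rfl⟩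
      · intro l hl
        rcases hl with rfl | ⟨i, hi, τ, hτ, rfl⟩
        · have hch : {j : Fin N | [] ++ [j] ∈ R} = I := by
            ext j
            simp only [List.nil_append, Set.mem_setOf_eq]
            constructor
            · rintro (hj | ⟨i, hi, τ, hτ, heq⟩)
              · exact absurd hj (by simp)
              · obtain ⟨h1, -⟩ := List.cons_eq_cons.mp heq
                exact h1 ▸ hi
            · intro hj
              exact Set.mem_insert_of_mem _ ⟨j, hj, [], (hg1 j hj).1.1, rfl⟩
          rw [hch, hIcard]
        · have hch : {j : Fin N | (i :: τ) ++ [j] ∈ R} = {j : Fin N | τ ++ [j] ∈ g i} := by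
            ext j
            simp only [Set.mem_setOf_eq, List.cons_append]
            constructor
            · rintro (hj | ⟨i', hi', τ', hτ', heq⟩)
              · exact absurd hj (by simp)
              · obtain ⟨rfl, rfl⟩ := List.cons_eq_cons.mp heq
                exact hτ'
            · intro hj
              exact Set.mem_insert_of_mem _ ⟨i, hi, τ ++ [j], hj, rfl⟩
          rw [hch]
          exact (hg1 i hi).2 τ hτ
    have hinf := h R hR
    have hsub : TreeShift S σ ∩ R ⊆
        insert [] (⋃ i ∈ I, (fun τ => i :: τ) '' (TreeShift S (σ ++ [i]) ∩ g i)) := by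
      rintro l ⟨hlS, hlR⟩
      rcases hlR with rfl | ⟨i, hi, τ, hτ, rfl⟩
      · exact Set.mem_insert _ _
      · apply Set.mem_insert_of_mem
        refine Set.mem_biUnion hi ⟨τ, ⟨?_, hτ⟩, rfl⟩
        have : σ ++ i :: τ ∈ S := hlS
        simpa [TreeShift, List.append_assoc] using this
    have hfin : (insert ([] : List (Fin N))
        (⋃ i ∈ I, (fun τ => i :: τ) '' (TreeShift S (σ ++ [i]) ∩ g i))).Finite := by
      apply Set.Finite.insert
      exact Set.Finite.biUnion I.toFinite (fun i hi => (hg2 i hi).image _)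
    exact (hfin.subset hsub).not_infinite hinf
  have htot := Set.ncard_add_ncard_compl G
  rw [Nat.card_eq_fintype_card, Fintype.card_fin] at htot
  omega

/-- Proposition 1: if `S` is a subtree of the `N`-ary tree such that `S ∩ R` is
infinite for every `m`-regular subtree `R`, then `S` contains an
`(N - m + 1)`-regular subtree. -/
theorem subtree_regular_of_infinite_inter (N : ℕ) (hN : 1 ≤ N)
    (S : Set (List (Fin N))) (hS : IsSubtree S)
    (m : ℕ) (hm : 1 ≤ m) (hmN : m ≤ N)
    (hyp : ∀ R : Set (List (Fin N)), IsRegularSubtree m R → (S ∩ R).Infinite) :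
    ∃ F : Set (List (Fin N)), F ⊆ S ∧ IsRegularSubtree (N - m + 1) F := by
  classical
  have hroot : TreeGood S m [] := by
    intro R hR
    have hshift : TreeShift S [] = S := by ext τ; simp [TreeShift]
    rw [hshift]
    exact hyp R hR
  have key : ∀ σ : List (Fin N), ∃ Cσ : Set (Fin N),
      TreeGood S m σ → Cσ ⊆ {i | TreeGood S m (σ ++ [i])} ∧ Cσ.ncard = N - m + 1 := by
    intro σ
    by_cases hσ : TreeGood S m σ
    · obtain ⟨Cσ, h1, h2⟩ := Set.exists_subset_card_eq (good_children hm hmN S σ hσ)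
      exact ⟨Cσ, fun _ => ⟨h1, h2⟩⟩
    · exact ⟨∅, fun hg => absurd hg hσ⟩
  choose C hC using key
  set F : Set (List (Fin N)) :=
    {σ | ∀ τ : List (Fin N), ∀ i : Fin N, τ ++ [i] <+: σ → i ∈ C τ} with hFdef
  have hFconcat : ∀ (σ : List (Fin N)) (i : Fin N), σ ++ [i] ∈ F ↔ σ ∈ F ∧ i ∈ C σ := by
    intro σ i
    constructor
    · intro h
      exact ⟨fun τ j hpre => h τ j (hpre.trans (List.prefix_append _ _)),
        h σ i (List.prefix_refl _)⟩
    · rintro ⟨h1, h2⟩ τ j hpre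
      rcases list_prefix_concat hpre with hpre' | heq
      · exact h1 τ j hpre'
      · obtain ⟨rfl, hji⟩ := List.append_inj' heq rfl
        obtain rfl : j = i := by simpa using hji
        exact h2
  have hFgood : ∀ σ ∈ F, TreeGood S m σ := by
    intro σ
    induction σ using List.reverseRecOn with
    | nil => exact fun _ => hroot
    | append_singleton σ i ih =>
      intro h
      rw [hFconcat] at h
      exact (hC σ (ih h.1)).1 h.2
  refine ⟨F, fun σ hσ => good_mem hmN hS (hFgood σ hσ), ?_, ?_⟩
  · constructor
    · intro τ i hpre
      exact absurd hpre.length_le (by simp)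
    · intro σ hσ τ hpre τ' j h'
      exact hσ τ' j (h'.trans hpre)
  · intro σ hσ
    have hset : {i : Fin N | σ ++ [i] ∈ F} = C σ := by
      ext i
      rw [Set.mem_setOf_eq, hFconcat]
      exact and_iff_right hσ
    rw [hset]
    exact (hC σ (hFgood σ hσ)).2
end

section
/- Let N, h ∈ ℕ with N ≥ 1 and h ≥ 1, let T be the full N-ary tree of height h (all lists over Fin N of length ≤ h), let S ⊆ T be a subtree, and let m be an integer with 1 ≤ m ≤ N. Suppose that for every (m,h)-regular subtree R of T, there exists a list of length h belonging to both S and R. Then S contains an (N−m+1,h)-regular subtree. -/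
/-- An `(m,h)`-regular subtree: a subtree all of whose vertices have length `≤ h`
such that every vertex of length `< h` has exactly `m` one-step extensions
in the tree. -/
def IsRegularSubtreeOfHeight {N : ℕ} (m h : ℕ) (R : Set (List (Fin N))) : Prop :=
  IsSubtree R ∧ (∀ σ ∈ R, σ.length ≤ h) ∧
    ∀ σ ∈ R, σ.length < h → {i : Fin N | σ ++ [i] ∈ R}.ncard = m

lemma prefix_concat_cases {α : Type*} {l s : List α} {a : α}
    (h : l <+: s ++ [a]) : l <+: s ∨ l = s ++ [a] := by
  rcases le_or_gt l.length s.length with hle | hlt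
  · exact Or.inl (List.prefix_of_prefix_length_le h (List.prefix_append s [a]) hle)
  · right
    apply h.eq_of_length
    have := h.length_le
    simp at this ⊢
    omega

/-- General construction: from a predicate `P` holding at the root and a
choice of `k` children preserving `P`, build a `(k,h)`-regular subtree all of
whose vertices satisfy `P`. -/
lemma buildTree {N : ℕ} (h k : ℕ) (P : List (Fin N) → Prop) (hP0 : P [])
    (hc : ∀ σ : List (Fin N), P σ → σ.length < h →
      ∃ s : Finset (Fin N), s.card = k ∧ ∀ i ∈ s, P (σ ++ [i])) :
    ∃ R : Set (List (Fin N)), IsRegularSubtreeOfHeight k h R ∧ ∀ σ ∈ R, P σ := by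
  classical
  set c : List (Fin N) → Finset (Fin N) := fun σ =>
    if hσ : P σ ∧ σ.length < h then (hc σ hσ.1 hσ.2).choose else ∅ with hcdef
  have hccard : ∀ σ, P σ → σ.length < h → (c σ).card = k := by
    intro σ h1 h2
    simp only [hcdef, dif_pos (And.intro h1 h2)]
    exact (hc σ h1 h2).choose_spec.1
  have hcP : ∀ σ, P σ → σ.length < h → ∀ i ∈ c σ, P (σ ++ [i]) := by
    intro σ h1 h2
    simp only [hcdef, dif_pos (And.intro h1 h2)]
    exact (hc σ h1 h2).choose_spec.2
  set R : Set (List (Fin N)) :=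
    {σ | σ.length ≤ h ∧ ∀ τ : List (Fin N), ∀ i : Fin N, τ ++ [i] <+: σ → i ∈ c τ} with hRdef
  have hroot : [] ∈ R := by
    refine ⟨by simp, ?_⟩
    intro τ i hpre
    have := hpre.length_le
    simp at this
  have hpref : ∀ σ ∈ R, ∀ τ : List (Fin N), τ <+: σ → τ ∈ R := by
    rintro σ ⟨hσl, hσp⟩ τ hτ
    exact ⟨hτ.length_le.trans hσl, fun τ' i hpre => hσp τ' i (hpre.trans hτ)⟩
  have hmem : ∀ σ ∈ R, P σ := by
    intro σ
    induction σ using List.reverseRecOn with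
    | nil => intro _; exact hP0
    | append_singleton τ i ih =>
      intro hσ
      have hτR : τ ∈ R := hpref _ hσ τ ⟨[i], rfl⟩
      have hPτ : P τ := ih hτR
      have hlen : τ.length < h := by
        have := hσ.1; simp at this; omega
      have hic : i ∈ c τ := hσ.2 τ i (List.prefix_refl _)
      exact hcP τ hPτ hlen i hic
  refine ⟨R, ⟨⟨hroot, fun σ hσ τ hτ => hpref σ hσ τ hτ⟩, fun σ hσ => hσ.1, ?_⟩, hmem⟩
  intro σ hσ hlt
  have hset : {i : Fin N | σ ++ [i] ∈ R} = ↑(c σ) := by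
    ext i
    simp only [Set.mem_setOf_eq, Finset.coe_sort_coe, Finset.mem_coe]
    constructor
    · intro hi
      exact hi.2 σ i (List.prefix_refl _)
    · intro hi
      refine ⟨by simp; omega, ?_⟩
      intro τ j hpre
      rcases prefix_concat_cases hpre with hp | he
      · exact hσ.2 τ j hp
      · have h1 : τ = σ ∧ j = i := by
          constructor
          · have : (τ ++ [j]).dropLast = (σ ++ [i]).dropLast := by rw [he]
            simpa using this
          · have : (τ ++ [j]).getLast (by simp) = (σ ++ [i]).getLast (by simp) := by
              congr 1
            simpa using this
        rw [h1.1, h1.2]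
        exact hi
  rw [hset, Set.ncard_coe_finset]
  exact hccard σ (hmem σ hσ) hlt

/-- Goodness with remaining depth `k`. -/
def Good (N m : ℕ) (S : Set (List (Fin N))) : ℕ → List (Fin N) → Prop
  | 0, σ => σ ∈ S
  | k+1, σ => σ ∈ S ∧ N - m + 1 ≤ {i : Fin N | Good N m S k (σ ++ [i])}.ncard

lemma Good.mem {N m : ℕ} {S : Set (List (Fin N))} {k : ℕ} {σ : List (Fin N)}
    (h : Good N m S k σ) : σ ∈ S := by
  cases k with
  | zero => exact h
  | succ k => exact h.1

/-- Lemma 1 (finite version): let `S` be a subtree of the full `N`-ary tree of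
height `h`.  If every `(m,h)`-regular subtree meets the `h`-th level of `S`,
then `S` contains an `(N - m + 1, h)`-regular subtree. -/
theorem finite_subtree_regular (N h : ℕ) (hN : 1 ≤ N) (hh : 1 ≤ h)
    (S : Set (List (Fin N))) (hS : IsSubtree S) (hSh : ∀ σ ∈ S, σ.length ≤ h)
    (m : ℕ) (hm : 1 ≤ m) (hmN : m ≤ N)
    (hyp : ∀ R : Set (List (Fin N)), IsRegularSubtreeOfHeight m h R →
      ∃ σ : List (Fin N), σ.length = h ∧ σ ∈ S ∧ σ ∈ R) :
    ∃ F : Set (List (Fin N)), F ⊆ S ∧ IsRegularSubtreeOfHeight (N - m + 1) h F := by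
  classical
  -- Step A: the root is good.
  have hrootgood : Good N m S h [] := by
    by_contra hbad
    have hchoice : ∀ σ : List (Fin N), ¬ Good N m S (h - σ.length) σ → σ.length < h →
        ∃ s : Finset (Fin N), s.card = m ∧
          ∀ i ∈ s, ¬ Good N m S (h - (σ ++ [i]).length) (σ ++ [i]) := by
      intro σ hPσ hlen
      have hk : h - σ.length = (h - σ.length - 1) + 1 := by omega
      set k := h - σ.length - 1 with hkdef
      rw [hk] at hPσ
      have hgoodcard : {i : Fin N | Good N m S k (σ ++ [i])}.ncard ≤ N - m := by
        by_cases hσS : σ ∈ S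
        · by_contra hcon
          exact hPσ ⟨hσS, by omega⟩
        · have : {i : Fin N | Good N m S k (σ ++ [i])} = ∅ := by
            ext i
            simp only [Set.mem_setOf_eq, Set.mem_empty_iff_false, iff_false]
            intro hg
            exact hσS (hS.2 _ hg.mem σ ⟨[i], rfl⟩)
          rw [this]; simp
      have hcompl : m ≤ {i : Fin N | Good N m S k (σ ++ [i])}ᶜ.ncard := by
        have := Set.ncard_add_ncard_compl {i : Fin N | Good N m S k (σ ++ [i])}
          (Set.toFinite _) (Set.toFinite _)
        rw [Nat.card_eq_fintype_card, Fintype.card_fin] at this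
        omega
      obtain ⟨t, hts, htc⟩ := Set.exists_subset_card_eq hcompl
      refine ⟨(Set.toFinite t).toFinset, ?_, ?_⟩
      · rw [Set.Finite.card_toFinset, ← Set.toFinset_card,
          ← Set.ncard_eq_toFinset_card']
        exact htc
      · intro i hi
        have hit : i ∈ t := by simpa using hi
        have : ¬ Good N m S k (σ ++ [i]) := hts hit
        have hlen2 : h - (σ ++ [i]).length = k := by
          simp only [List.length_append, List.length_singleton]; omega
        rw [hlen2]
        exact this
    obtain ⟨R, hReg, hRP⟩ := buildTree h m (fun σ => ¬ Good N m S (h - σ.length) σ)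
      (by simpa using hbad) hchoice
    obtain ⟨σ, hσl, hσS, hσR⟩ := hyp R hReg
    have := hRP σ hσR
    rw [hσl] at this
    simp only [Nat.sub_self] at this
    exact this hσS
  -- Step B: build the (N-m+1)-regular subtree inside the good vertices.
  have hchoiceB : ∀ σ : List (Fin N), Good N m S (h - σ.length) σ → σ.length < h →
      ∃ s : Finset (Fin N), s.card = N - m + 1 ∧
        ∀ i ∈ s, Good N m S (h - (σ ++ [i]).length) (σ ++ [i]) := by
    intro σ hPσ hlen
    have hk : h - σ.length = (h - σ.length - 1) + 1 := by omega
    set k := h - σ.length - 1 with hkdef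
    rw [hk] at hPσ
    obtain ⟨t, hts, htc⟩ := Set.exists_subset_card_eq hPσ.2
    refine ⟨(Set.toFinite t).toFinset, ?_, ?_⟩
    · rw [Set.Finite.card_toFinset, ← Set.toFinset_card,
        ← Set.ncard_eq_toFinset_card']
      exact htc
    · intro i hi
      have hit : i ∈ t := by simpa using hi
      have : Good N m S k (σ ++ [i]) := hts hit
      have hlen2 : h - (σ ++ [i]).length = k := by
        simp only [List.length_append, List.length_singleton]; omega
      rw [hlen2]
      exact this
  obtain ⟨F, hFreg, hFP⟩ := buildTree h (N - m + 1)
    (fun σ => Good N m S (h - σ.length) σ) (by simpa using hrootgood) hchoiceB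
  exact ⟨F, fun σ hσ => (hFP σ hσ).mem, hFreg⟩
end

section
/- Let s, t > 0 with s + t = 1, let θ ∈ ℝ, let c > 0 with c ≤ inf_{q ∈ ℕ, q ≥ 1} q^(1/s) ‖qθ‖, and let p, q, r be integers with q > 0 and |θ − p/q| < c / q^{1+s}. Then there exist integers A, B, C with |A| ≤ q^s, 0 < B ≤ q^t, and A·p − B·r + C·q = 0; equivalently, there exists a non-vertical rational line y = (Ax + C)/B with |A| ≤ q^s and 0 < B ≤ q^t passing through the point (p/q, r/q). -/
/-- Distance from a real number to the nearest integer. -/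
noncomputable def dInt (x : ℝ) : ℝ := ⨅ n : ℤ, |x - n|

lemma dInt_nonneg (x : ℝ) : 0 ≤ dInt x :=
  le_ciInf fun n => abs_nonneg _

lemma dInt_le (x : ℝ) (n : ℤ) : dInt x ≤ |x - n| :=
  ciInf_le ⟨0, by rintro y ⟨m, rfl⟩; exact abs_nonneg _⟩ n

/-- Auxiliary: the bad case `B = 0` contradicts the approximation hypothesis. -/
lemma no_rational_close (s t θ c : ℝ) (hs : 0 < s) (ht : 0 < t) (hst : s + t = 1)
    (hc : 0 < c)
    (hcθ : c ≤ ⨅ q : {q : ℕ // 0 < q}, (q : ℝ) ^ (1 / s) * dInt ((q : ℝ) * θ))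
    (p q : ℤ) (hq : 0 < q)
    (hpq : |θ - (p : ℝ) / (q : ℝ)| < c / (q : ℝ) ^ (1 + s))
    (A k : ℤ) (hA0 : A ≠ 0) (hAle : |(A : ℝ)| ≤ (q : ℝ) ^ s)
    (hk : A * p = k * q) : False := by
  have hq0 : (0:ℝ) < (q:ℝ) := by exact_mod_cast hq
  set a : ℕ := A.natAbs with ha_def
  have ha : 0 < a := Int.natAbs_pos.mpr hA0
  have haA : ((a : ℕ) : ℝ) = |(A : ℝ)| := by
    rw [ha_def, Nat.cast_natAbs, Int.cast_abs]
  -- the infimum is bounded below by 0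
  have hbdd : BddBelow (Set.range fun q : {q : ℕ // 0 < q} =>
      (q : ℝ) ^ (1 / s) * dInt ((q : ℝ) * θ)) := by
    refine ⟨0, ?_⟩
    rintro y ⟨m, rfl⟩
    exact mul_nonneg (Real.rpow_nonneg (by positivity) _) (dInt_nonneg _)
  have h1 : c ≤ ((a : ℝ)) ^ (1 / s) * dInt ((a : ℝ) * θ) :=
    le_trans hcθ (ciInf_le hbdd ⟨a, ha⟩)
  -- dInt (a θ) ≤ |A θ - k|
  have h2 : dInt ((a : ℝ) * θ) ≤ |(A : ℝ) * θ - (k : ℝ)| := by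
    rcases hA0.lt_or_gt with hneg | hpos
    · have haA' : ((a : ℕ) : ℝ) = -(A : ℝ) := by
        rw [haA, abs_of_neg (by exact_mod_cast hneg)]
      calc dInt ((a : ℝ) * θ) ≤ |(a : ℝ) * θ - ((-k : ℤ) : ℝ)| := dInt_le _ _
        _ = |(A : ℝ) * θ - (k : ℝ)| := by
            rw [haA']
            push_cast
            rw [show -(A : ℝ) * θ - -(k : ℝ) = -((A : ℝ) * θ - (k : ℝ)) by ring, abs_neg]
    · have haA' : ((a : ℕ) : ℝ) = (A : ℝ) := by
        rw [haA, abs_of_pos (by exact_mod_cast hpos)]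
      calc dInt ((a : ℝ) * θ) ≤ |(a : ℝ) * θ - ((k : ℤ) : ℝ)| := dInt_le _ _
        _ = |(A : ℝ) * θ - (k : ℝ)| := by rw [haA']
  -- |Aθ - k| = |A| |θ - p/q|
  have hkr : (k : ℝ) = (A : ℝ) * (p : ℝ) / (q : ℝ) := by
    have this : (A : ℝ) * (p : ℝ) = (k : ℝ) * (q : ℝ) := by exact_mod_cast hk
    field_simp
    linarith
  have h3 : |(A : ℝ) * θ - (k : ℝ)| = |(A : ℝ)| * |θ - (p : ℝ) / (q : ℝ)| := by
    rw [← abs_mul]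
    congr 1
    rw [hkr]
    field_simp
  have hqs0 : (0:ℝ) < (q:ℝ) ^ s := Real.rpow_pos_of_pos hq0 _
  have hq1s : (0:ℝ) < (q:ℝ) ^ (1 + s) := Real.rpow_pos_of_pos hq0 _
  have hApos : (0:ℝ) < |(A : ℝ)| := by
    simp only [abs_pos, ne_eq, Int.cast_eq_zero]; exact hA0
  have h4 : dInt ((a : ℝ) * θ) < (q:ℝ) ^ s * (c / (q:ℝ) ^ (1 + s)) := by
    calc dInt ((a : ℝ) * θ) ≤ |(A : ℝ)| * |θ - (p : ℝ) / (q : ℝ)| := by rw [← h3]; exact h2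
      _ < |(A : ℝ)| * (c / (q:ℝ) ^ (1 + s)) := by
          exact mul_lt_mul_of_pos_left hpq hApos
      _ ≤ (q:ℝ) ^ s * (c / (q:ℝ) ^ (1 + s)) := by
          apply mul_le_mul_of_nonneg_right hAle (by positivity)
  -- a^{1/s} ≤ q
  have h5 : ((a : ℝ)) ^ (1 / s) ≤ (q : ℝ) := by
    have : ((a : ℝ)) ^ (1 / s) ≤ ((q:ℝ) ^ s) ^ (1 / s) := by
      apply Real.rpow_le_rpow (by positivity) (haA ▸ hAle) (by positivity)
    calc ((a : ℝ)) ^ (1 / s) ≤ ((q:ℝ) ^ s) ^ (1 / s) := this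
      _ = (q : ℝ) ^ (s * (1 / s)) := (Real.rpow_mul hq0.le _ _).symm
      _ = (q : ℝ) := by
          rw [mul_one_div, div_self hs.ne', Real.rpow_one]
  -- combine
  have ha1 : (0:ℝ) < ((a : ℝ)) ^ (1 / s) := by
    apply Real.rpow_pos_of_pos
    exact_mod_cast ha
  have hfin : c < (q : ℝ) * ((q:ℝ) ^ s * (c / (q:ℝ) ^ (1 + s))) := by
    calc c ≤ ((a : ℝ)) ^ (1 / s) * dInt ((a : ℝ) * θ) := h1
      _ < ((a : ℝ)) ^ (1 / s) * ((q:ℝ) ^ s * (c / (q:ℝ) ^ (1 + s))) :=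
          mul_lt_mul_of_pos_left h4 ha1
      _ ≤ (q : ℝ) * ((q:ℝ) ^ s * (c / (q:ℝ) ^ (1 + s))) := by
          apply mul_le_mul_of_nonneg_right h5 (by positivity)
  have heq : (q : ℝ) * ((q:ℝ) ^ s * (c / (q:ℝ) ^ (1 + s))) = c := by
    rw [Real.rpow_add hq0, Real.rpow_one]
    field_simp
  rw [heq] at hfin
  exact lt_irrefl c hfin

/-- Lemma (BPV, Lemma 1): if `s,t > 0`, `s + t = 1`,
`0 < c ≤ inf_{q ≥ 1} q^(1/s) ‖qθ‖` and `|θ - p/q| < c/q^(1+s)` with `q > 0`,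
then there is a non-vertical rational line `y = (Ax + C)/B` through `(p/q, r/q)`
with `|A| ≤ q^s` and `0 < B ≤ q^t`. -/
theorem exists_line_through_good_point (s t θ c : ℝ)
    (hs : 0 < s) (ht : 0 < t) (hst : s + t = 1) (hc : 0 < c)
    (hcθ : c ≤ ⨅ q : {q : ℕ // 0 < q}, (q : ℝ) ^ (1 / s) * dInt ((q : ℝ) * θ))
    (p q r : ℤ) (hq : 0 < q)
    (hpq : |θ - (p : ℝ) / (q : ℝ)| < c / (q : ℝ) ^ (1 + s)) :
    ∃ A B C : ℤ, |(A : ℝ)| ≤ (q : ℝ) ^ s ∧ 0 < B ∧ (B : ℝ) ≤ (q : ℝ) ^ t ∧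
      A * p - B * r + C * q = 0 := by
  have hq0 : (0:ℝ) < (q:ℝ) := by exact_mod_cast hq
  have hq1 : (1:ℝ) ≤ (q:ℝ) := by exact_mod_cast hq
  set m : ℤ := ⌊(q:ℝ) ^ s⌋ with hm_def
  set n : ℤ := ⌊(q:ℝ) ^ t⌋ with hn_def
  have hqs1 : (1:ℝ) ≤ (q:ℝ) ^ s := Real.one_le_rpow hq1 hs.le
  have hqt1 : (1:ℝ) ≤ (q:ℝ) ^ t := Real.one_le_rpow hq1 ht.le
  have hm1 : 1 ≤ m := by
    rw [hm_def, Int.le_floor]; exact_mod_cast hqs1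
  have hn1 : 1 ≤ n := by
    rw [hn_def, Int.le_floor]; exact_mod_cast hqt1
  have hmle : (m : ℝ) ≤ (q:ℝ) ^ s := Int.floor_le _
  have hnle : (n : ℝ) ≤ (q:ℝ) ^ t := Int.floor_le _
  haveI : NeZero q.toNat := ⟨by omega⟩
  -- pigeonhole
  have hqlt : q < (m + 1) * (n + 1) := by
    have h1 : (q:ℝ) < ((m:ℝ) + 1) * ((n:ℝ) + 1) := by
      calc (q:ℝ) = (q:ℝ) ^ (s + t) := by rw [hst, Real.rpow_one]
        _ = (q:ℝ) ^ s * (q:ℝ) ^ t := Real.rpow_add hq0 s t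
        _ < ((m:ℝ) + 1) * ((n:ℝ) + 1) := by
            apply mul_lt_mul'' (Int.lt_floor_add_one _) (Int.lt_floor_add_one _)
              (by positivity) (by positivity)
    exact_mod_cast h1
  have hcard : (Finset.univ : Finset (ZMod q.toNat)).card <
      ((Finset.Icc (0:ℤ) m) ×ˢ (Finset.Icc (0:ℤ) n)).card := by
    rw [Finset.card_product, Finset.card_univ, ZMod.card, Int.card_Icc, Int.card_Icc]
    simp only [sub_zero]
    have e1 : ((m+1).toNat : ℤ) = m + 1 := Int.toNat_of_nonneg (by omega)
    have e2 : ((n+1).toNat : ℤ) = n + 1 := Int.toNat_of_nonneg (by omega)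
    have e3 : (q.toNat : ℤ) = q := Int.toNat_of_nonneg hq.le
    have := hqlt
    rw [← e1, ← e2, ← e3] at this
    exact_mod_cast this
  obtain ⟨⟨A₁, B₁⟩, hx, ⟨A₂, B₂⟩, hy, hne, heq⟩ :=
    Finset.exists_ne_map_eq_of_card_lt_of_maps_to hcard
      (f := fun ab : ℤ × ℤ => ((ab.1 * p - ab.2 * r : ℤ) : ZMod q.toNat))
      (fun _ _ => Finset.mem_univ _)
  simp only [Finset.mem_product, Finset.mem_Icc] at hx hy
  -- divisibility
  have hdvd0 : q ∣ (A₁ - A₂) * p - (B₁ - B₂) * r := by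
    have : ((A₁ * p - B₁ * r - (A₂ * p - B₂ * r) : ℤ) : ZMod q.toNat) = 0 := by
      push_cast
      simp only at heq
      rw [sub_eq_zero]
      push_cast at heq
      linear_combination heq
    have h := (ZMod.intCast_zmod_eq_zero_iff_dvd _ _).mp this
    rw [Int.toNat_of_nonneg hq.le] at h
    convert h using 1
    ring
  have hA12 : |A₁ - A₂| ≤ m := by
    rw [abs_le]; omega
  have hB12 : |B₁ - B₂| ≤ n := by
    rw [abs_le]; omega
  -- B₁ ≠ B₂
  have hBne : B₁ ≠ B₂ := by
    intro hB
    have hAne : A₁ - A₂ ≠ 0 := by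
      intro hA
      apply hne
      have : A₁ = A₂ := by omega
      simp [this, hB]
    have hdvd : q ∣ (A₁ - A₂) * p := by
      have := hdvd0
      rw [hB] at this
      simpa using this
    set A := A₁ - A₂ with hA_def
    obtain ⟨k, hk⟩ := hdvd
    refine no_rational_close s t θ c hs ht hst hc hcθ p q hq hpq A k hAne ?_ (by rw [hk]; ring)
    have : |(A : ℝ)| ≤ (m : ℝ) := by exact_mod_cast hA12
    linarith
  -- main case
  rcases lt_or_gt_of_ne hBne with hlt | hgt
  · -- B₂ - B₁ > 0, use (A₂ - A₁, B₂ - B₁)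
    refine ⟨A₂ - A₁, B₂ - B₁, -(((A₂ - A₁) * p - (B₂ - B₁) * r) / q), ?_, by omega, ?_, ?_⟩
    · have h1 : |A₂ - A₁| ≤ m := by rw [abs_le]; omega
      have : |((A₂ - A₁ : ℤ) : ℝ)| ≤ (m : ℝ) := by exact_mod_cast h1
      linarith
    · have h1 : B₂ - B₁ ≤ n := by omega
      have : ((B₂ - B₁ : ℤ) : ℝ) ≤ (n : ℝ) := by exact_mod_cast h1
      linarith
    · have hdvd : q ∣ (A₂ - A₁) * p - (B₂ - B₁) * r := by
        obtain ⟨k, hk⟩ := hdvd0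
        exact ⟨-k, by linarith [hk]⟩
      have := Int.ediv_mul_cancel hdvd
      linarith [this]
  · refine ⟨A₁ - A₂, B₁ - B₂, -(((A₁ - A₂) * p - (B₁ - B₂) * r) / q), ?_, by omega, ?_, ?_⟩
    · have : |((A₁ - A₂ : ℤ) : ℝ)| ≤ (m : ℝ) := by exact_mod_cast hA12
      linarith
    · have h1 : B₁ - B₂ ≤ n := by omega
      have : ((B₁ - B₂ : ℤ) : ℝ) ≤ (n : ℝ) := by exact_mod_cast h1
      linarith
    · have := Int.ediv_mul_cancel hdvd0
      linarith [this]
end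

section
/- Let s, t ≥ 0 with s + t = 1 and let p, q, r be integers with q > 0. Then there exist integers A, B, C with |A| ≤ q^s, 0 ≤ B ≤ q^t, (A, B) ≠ (0, 0), and A·p − B·r + C·q = 0. -/
/-- Pigeonhole step of BPV, Lemma 1: for `s,t ≥ 0` with `s + t = 1` and integers
`p, q, r` with `q > 0`, there exist integers `A, B, C` with `|A| ≤ q^s`,
`0 ≤ B ≤ q^t`, `(A,B) ≠ (0,0)` and `Ap - Br + Cq = 0`. -/
theorem exists_integer_relation (s t : ℝ) (hs : 0 ≤ s) (ht : 0 ≤ t) (hst : s + t = 1)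
    (p q r : ℤ) (hq : 0 < q) :
    ∃ A B C : ℤ, |(A : ℝ)| ≤ (q : ℝ) ^ s ∧ 0 ≤ B ∧ (B : ℝ) ≤ (q : ℝ) ^ t ∧
      ¬(A = 0 ∧ B = 0) ∧ A * p - B * r + C * q = 0 := by
  have hq0 : (0:ℝ) < (q:ℝ) := by exact_mod_cast hq
  set m : ℕ := ⌊(q:ℝ) ^ s⌋₊ with hm
  set n : ℕ := ⌊(q:ℝ) ^ t⌋₊ with hn
  have hms : (m:ℝ) ≤ (q:ℝ) ^ s := Nat.floor_le (Real.rpow_nonneg hq0.le s)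
  have hnt : (n:ℝ) ≤ (q:ℝ) ^ t := Nat.floor_le (Real.rpow_nonneg hq0.le t)
  have hqmn : (q:ℝ) < ((m:ℝ)+1) * ((n:ℝ)+1) := by
    have h1 : (q:ℝ) ^ s < (m:ℝ) + 1 := Nat.lt_floor_add_one _
    have h2 : (q:ℝ) ^ t < (n:ℝ) + 1 := Nat.lt_floor_add_one _
    calc (q:ℝ) = (q:ℝ) ^ s * (q:ℝ) ^ t := by
          rw [← Real.rpow_add hq0, hst, Real.rpow_one]
      _ < ((m:ℝ)+1) * ((n:ℝ)+1) :=
          mul_lt_mul'' h1 h2 (Real.rpow_nonneg hq0.le s) (Real.rpow_nonneg hq0.le t)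
  have hqN : q.toNat < (m+1) * (n+1) := by
    have hqr : ((q.toNat : ℕ) : ℝ) = (q : ℝ) := by
      exact_mod_cast Int.toNat_of_nonneg hq.le
    have hc : ((q.toNat : ℝ)) < (((m+1)*(n+1) : ℕ) : ℝ) := by
      rw [hqr]; push_cast; exact hqmn
    exact_mod_cast hc
  haveI : NeZero q.toNat := ⟨by omega⟩
  obtain ⟨x, hx, y, hy, hxy, hfxy⟩ :=
    Finset.exists_ne_map_eq_of_card_lt_of_maps_to
      (s := Finset.range (m+1) ×ˢ Finset.range (n+1))
      (t := (Finset.univ : Finset (ZMod q.toNat)))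
      (f := fun ab => (((ab.1 : ℤ) * p - (ab.2 : ℤ) * r : ℤ) : ZMod q.toNat))
      (by simpa [ZMod.card] using hqN) (fun a _ => Finset.mem_univ _)
  have key : ∀ u v : ℕ × ℕ,
      u ∈ Finset.range (m+1) ×ˢ Finset.range (n+1) →
      v ∈ Finset.range (m+1) ×ˢ Finset.range (n+1) →
      u ≠ v → v.2 ≤ u.2 →
      (((u.1 : ℤ) * p - (u.2 : ℤ) * r : ℤ) : ZMod q.toNat) =
        (((v.1 : ℤ) * p - (v.2 : ℤ) * r : ℤ) : ZMod q.toNat) →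
      ∃ A B C : ℤ, |(A : ℝ)| ≤ (q : ℝ) ^ s ∧ 0 ≤ B ∧ (B : ℝ) ≤ (q : ℝ) ^ t ∧
        ¬(A = 0 ∧ B = 0) ∧ A * p - B * r + C * q = 0 := by
    intro u v hu hv huv hb hf
    simp only [Finset.mem_product, Finset.mem_range] at hu hv
    have hmod : ((u.1 : ℤ) * p - (u.2 : ℤ) * r) ≡ ((v.1 : ℤ) * p - (v.2 : ℤ) * r)
        [ZMOD (q.toNat : ℕ)] := (ZMod.intCast_eq_intCast_iff _ _ _).mp hf
    have hqt : (q.toNat : ℤ) = q := Int.toNat_of_nonneg hq.le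
    have hdvd : q ∣ (((u.1 : ℤ) - v.1) * p - ((u.2 : ℤ) - v.2) * r) := by
      have h := hmod.symm.dvd
      rw [hqt] at h
      have heq : (((u.1 : ℤ) - v.1) * p - ((u.2 : ℤ) - v.2) * r) =
          ((u.1 : ℤ) * p - (u.2 : ℤ) * r) - ((v.1 : ℤ) * p - (v.2 : ℤ) * r) := by ring
      rw [heq]; exact h
    obtain ⟨k, hk⟩ := hdvd
    refine ⟨(u.1 : ℤ) - v.1, (u.2 : ℤ) - v.2, -k, ?_, by
      have := hb; omega, ?_, ?_, by rw [hk]; ring⟩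
    · have habs : |(u.1 : ℤ) - v.1| ≤ (m : ℤ) := by
        rw [abs_sub_le_iff]; constructor <;> omega
      have : |((u.1 : ℤ) - v.1 : ℤ)| ≤ (m : ℝ) := by exact_mod_cast habs
      calc |(((u.1 : ℤ) - v.1 : ℤ) : ℝ)| ≤ (m : ℝ) := by
            have h2 : ((|(u.1 : ℤ) - v.1| : ℤ) : ℝ) ≤ (m : ℝ) := by exact_mod_cast habs
            rwa [Int.cast_abs] at h2
        _ ≤ (q:ℝ) ^ s := hms
    · have hble : (u.2 : ℤ) - v.2 ≤ (n : ℤ) := by omega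
      have : (((u.2 : ℤ) - v.2 : ℤ) : ℝ) ≤ (n : ℝ) := by exact_mod_cast hble
      exact this.trans hnt
    · rintro ⟨hA, hB⟩
      apply huv
      have h1 : u.1 = v.1 := by omega
      have h2 : u.2 = v.2 := by omega
      exact Prod.ext h1 h2
  rcases le_total y.2 x.2 with h | h
  · exact key x y hx hy hxy h hfxy
  · exact key y x hy hx hxy.symm h hfxy.symm
end

section
/- Let x ∈ ℝ satisfy inf_{q ∈ ℕ, q ≥ 1} q ‖qx‖ = 0. Then for every y ∈ ℝ, inf_{q ∈ ℕ, q ≥ 1} max(q ‖qx‖, ‖qy‖) = 0. -/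
lemma dInt_bdd (x : ℝ) : BddBelow (Set.range fun n : ℤ => |x - n|) :=
  ⟨0, by rintro r ⟨n, rfl⟩; exact abs_nonneg _⟩

lemma dInt_eq_round (x : ℝ) : dInt x = |x - round x| := by
  refine le_antisymm (dInt_le x _) (le_ciInf fun n => ?_)
  rcases eq_or_ne n (round x) with rfl | hne
  · exact le_rfl
  · have h1 : (1 : ℝ) ≤ |(n : ℝ) - round x| := by
      have h0 : (n : ℤ) - round x ≠ 0 := sub_ne_zero.mpr hne
      have := Int.one_le_abs h0
      calc (1:ℝ) ≤ |((n - round x : ℤ) : ℝ)| := by exact_mod_cast this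
        _ = |(n : ℝ) - round x| := by push_cast; ring_nf
    have h2 : |x - round x| ≤ 1/2 := abs_sub_round x
    have h3 : |(n:ℝ) - round x| ≤ |x - n| + |x - round x| := by
      calc |(n:ℝ) - round x| = |((n:ℝ) - x) - ((round x : ℝ) - x)| := by ring_nf
        _ ≤ |(n:ℝ) - x| + |(round x:ℝ) - x| := abs_sub _ _
        _ = |x - n| + |x - round x| := by
            rw [abs_sub_comm, abs_sub_comm ((round x:ℝ)) x]
    linarith

lemma dInt_nat_mul (k : ℕ) (z : ℝ) : dInt (k * z) ≤ k * dInt z := by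
  calc dInt ((k:ℝ) * z) ≤ |(k:ℝ) * z - (k * round z : ℤ)| := dInt_le _ _
    _ = (k : ℝ) * |z - round z| := by
        push_cast
        rw [← mul_sub, abs_mul, abs_of_nonneg (by positivity : (0:ℝ) ≤ (k:ℝ))]
    _ = k * dInt z := by rw [dInt_eq_round]

/-- If `inf_{q ≥ 1} q ‖qx‖ = 0`, then for every `y`,
`inf_{q ≥ 1} max(q ‖qx‖, ‖qy‖) = 0`. -/
theorem inf_max_eq_zero (x : ℝ)
    (hx : ⨅ q : {q : ℕ // 0 < q}, (q : ℝ) * dInt ((q : ℝ) * x) = 0) :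
    ∀ y : ℝ,
      ⨅ q : {q : ℕ // 0 < q},
        max ((q : ℝ) * dInt ((q : ℝ) * x)) (dInt ((q : ℝ) * y)) = 0 := by
  intro y
  have bdd : BddBelow (Set.range fun q : {q : ℕ // 0 < q} =>
      max ((q : ℝ) * dInt ((q : ℝ) * x)) (dInt ((q : ℝ) * y))) := by
    refine ⟨0, ?_⟩
    rintro r ⟨q, rfl⟩
    exact le_max_of_le_right (dInt_nonneg _)
  refine le_antisymm ?_ (le_ciInf fun q => le_max_of_le_right (dInt_nonneg _))
  refine le_of_forall_pos_le_add fun ε hε => ?_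
  rw [zero_add]
  set K : ℕ := ⌈1/ε⌉₊ with hK
  have hK1 : 0 < K := Nat.ceil_pos.mpr (by positivity)
  have hKε : 1/ε ≤ (K : ℝ) := Nat.le_ceil _
  have hδ : (0:ℝ) < ε / (K^2) := by positivity
  have hlt : (⨅ q : {q : ℕ // 0 < q}, (q : ℝ) * dInt ((q : ℝ) * x)) < ε / (K^2) := by
    rw [hx]; exact hδ
  obtain ⟨q, hq⟩ := exists_lt_of_ciInf_lt hlt
  obtain ⟨j, k, hk0, hkK, hjk⟩ := Real.exists_int_int_abs_mul_sub_le ((q:ℝ) * y) hK1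
  have hknat : ((k.toNat : ℤ)) = k := Int.toNat_of_nonneg hk0.le
  set q' : ℕ := k.toNat * q with hq'
  have hq'pos : 0 < q' := Nat.mul_pos (by omega) q.2
  have hktR : ((k.toNat : ℝ)) = (k : ℝ) := by exact_mod_cast hknat
  have hcast : (q' : ℝ) = (k : ℝ) * q := by
    rw [hq']; push_cast [hktR]; ring
  refine le_trans (ciInf_le bdd ⟨q', hq'pos⟩) ?_
  have hkKR : (k : ℝ) ≤ K := by exact_mod_cast hkK
  have hkR0 : (0:ℝ) < (k : ℝ) := by exact_mod_cast hk0
  have hy : dInt ((q' : ℝ) * y) ≤ ε := by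
    have h2 : (q' : ℝ) * y = (k : ℝ) * ((q:ℝ) * y) := by rw [hcast]; ring
    have h3 : (1:ℝ)/(K+1) ≤ ε := by
      rw [div_le_iff₀ (by positivity)]
      have h4 : 1/ε < (K:ℝ) + 1 := lt_of_le_of_lt hKε (by linarith)
      rw [div_lt_iff₀ hε] at h4
      linarith
    calc dInt ((q' : ℝ) * y) ≤ |(q' : ℝ) * y - j| := dInt_le _ j
      _ = |(k:ℝ) * ((q:ℝ) * y) - j| := by rw [h2]
      _ ≤ 1/(K+1) := hjk
      _ ≤ ε := h3
  have hxb : (q' : ℝ) * dInt ((q' : ℝ) * x) ≤ ε := by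
    have h2 : (q' : ℝ) * x = (k.toNat : ℝ) * ((q:ℝ) * x) := by
      push_cast [hq']; ring
    have h4 : dInt ((q' : ℝ) * x) ≤ (k.toNat : ℝ) * dInt ((q:ℝ) * x) := by
      rw [h2]; exact dInt_nat_mul _ _
    calc (q' : ℝ) * dInt ((q' : ℝ) * x)
        ≤ (q' : ℝ) * ((k.toNat : ℝ) * dInt ((q:ℝ) * x)) := by
          apply mul_le_mul_of_nonneg_left h4 (by positivity)
      _ = (k:ℝ)^2 * ((q:ℝ) * dInt ((q:ℝ) * x)) := by rw [hcast, hktR]; ring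
      _ ≤ (K:ℝ)^2 * ((q:ℝ) * dInt ((q:ℝ) * x)) := by
          apply mul_le_mul_of_nonneg_right _ ?_
          · exact pow_le_pow_left₀ hkR0.le hkKR 2
          · have := mul_nonneg (by positivity : (0:ℝ) ≤ (q:ℝ)) (dInt_nonneg ((q:ℝ)*x))
            exact this
      _ ≤ (K:ℝ)^2 * (ε / K^2) := by
          apply mul_le_mul_of_nonneg_left hq.le (by positivity)
      _ = ε := by field_simp
  exact max_le hxb hy
end

section
/- Let s, t > 0 with s + t = 1, let θ ∈ ℝ and c > 0. Let p, q, r, A, B, C be integers with q > 0, B > 0, |θ − p/q| < c / q^{1+s}, |A| ≤ q^s, B ≤ q^t, and A·p − B·r + C·q = 0. Then every y ∈ ℝ with |y − r/q| < c / q^{1+t} satisfies |y − (Aθ + C)/B| < 2c / (qB). -/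
/-- If the rational point `(p/q, r/q)` is close to the vertical line through `θ`
and lies on the rational line `y = (Ax + C)/B` with `|A| ≤ q^s`, `0 < B ≤ q^t`,
then every `y` with `|y - r/q| < c/q^(1+t)` satisfies
`|y - (Aθ + C)/B| < 2c/(qB)`. -/
theorem near_line_estimate (s t θ c : ℝ) (hs : 0 < s) (ht : 0 < t) (hst : s + t = 1)
    (hc : 0 < c) (p q r A B C : ℤ) (hq : 0 < q) (hB : 0 < B)
    (hpq : |θ - (p : ℝ) / (q : ℝ)| < c / (q : ℝ) ^ (1 + s))
    (hA : |(A : ℝ)| ≤ (q : ℝ) ^ s) (hBq : (B : ℝ) ≤ (q : ℝ) ^ t)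
    (hline : A * p - B * r + C * q = 0) :
    ∀ y : ℝ, |y - (r : ℝ) / (q : ℝ)| < c / (q : ℝ) ^ (1 + t) →
      |y - ((A : ℝ) * θ + (C : ℝ)) / (B : ℝ)| < 2 * c / ((q : ℝ) * (B : ℝ)) := by
  intro y hy
  have hq' : (0:ℝ) < q := by exact_mod_cast hq
  have hB' : (0:ℝ) < B := by exact_mod_cast hB
  have hline' : (A:ℝ) * p - B * r + C * q = 0 := by exact_mod_cast hline
  have hqs : (0:ℝ) < (q:ℝ) ^ s := Real.rpow_pos_of_pos hq' s
  have hqt : (0:ℝ) < (q:ℝ) ^ t := Real.rpow_pos_of_pos hq' t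
  have hq1s : (q:ℝ) ^ (1 + s) = q * (q:ℝ) ^ s := by
    rw [Real.rpow_add hq', Real.rpow_one]
  have hq1t : (q:ℝ) ^ (1 + t) = q * (q:ℝ) ^ t := by
    rw [Real.rpow_add hq', Real.rpow_one]
  have hr : (r:ℝ) / q = ((A:ℝ) * (p / q) + C) / B := by
    field_simp
    linear_combination (-1:ℝ) * hline'
  have key : y - ((A:ℝ) * θ + C) / B = (y - r / q) - (A / B) * (θ - p / q) := by
    rw [hr]; field_simp; ring
  -- bound first term
  have h1 : c / (q:ℝ) ^ (1 + t) ≤ c / (q * B) := by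
    apply div_le_div_of_nonneg_left hc.le (by positivity)
    rw [hq1t]
    exact mul_le_mul_of_nonneg_left hBq hq'.le
  -- bound second term
  have h2 : |(A:ℝ) / B * (θ - p / q)| ≤ c / (q * B) := by
    rw [abs_mul, abs_div, abs_of_pos hB']
    have hA0 : (0:ℝ) ≤ |(A:ℝ)| := abs_nonneg _
    calc |(A:ℝ)| / B * |θ - p / q| ≤ (q:ℝ) ^ s / B * (c / (q:ℝ) ^ (1 + s)) := by
          gcongr
      _ = c / (q * B) := by rw [hq1s]; field_simp
  calc |y - ((A:ℝ) * θ + C) / B| ≤ |y - r / q| + |(A:ℝ) / B * (θ - p / q)| := by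
        rw [key, sub_eq_add_neg]
        exact (abs_add_le _ _).trans (by rw [abs_neg])
    _ < c / (q * B) + c / (q * B) := by
        exact add_lt_add_of_lt_of_le (lt_of_lt_of_le hy h1) h2
    _ = 2 * c / (q * B) := by ring
end

section
/- Let (a_n)_{n≥0} be a sequence of real numbers with a₀ = 1 such that for every n ≥ 1, a_n ≥ 6·a_{n−1} − Σ_{k=1}^{n} 2·a_{n−k}. Then for every n ≥ 1, a_n > 2·a_{n−1}; in particular a_n > 0 for all n and the sequence is strictly increasing and unbounded. -/
/-- The counting recurrence: if `a₀ = 1` and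
`aₙ ≥ 6·aₙ₋₁ - Σ_{k=1}^{n} 2·aₙ₋ₖ` for all `n ≥ 1`, then `aₙ > 2·aₙ₋₁`
for all `n ≥ 1`; in particular all `aₙ > 0`, the sequence is strictly
increasing, and it is unbounded. -/
theorem counting_recurrence (a : ℕ → ℝ) (h0 : a 0 = 1)
    (hrec : ∀ n : ℕ, 1 ≤ n →
      6 * a (n - 1) - ∑ k ∈ Finset.Icc 1 n, 2 * a (n - k) ≤ a n) :
    (∀ n : ℕ, 1 ≤ n → 2 * a (n - 1) < a n) ∧ (∀ n : ℕ, 0 < a n) ∧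
      StrictMono a ∧ ¬ BddAbove (Set.range a) := by
  have hS : ∀ n : ℕ, ∑ k ∈ Finset.Icc 1 n, 2 * a (n - k)
      = 2 * ∑ j ∈ Finset.range n, a j := by
    intro n
    rw [← Finset.Ico_add_one_right_eq_Icc, Finset.sum_Ico_eq_sum_range]
    have : ∀ i ∈ Finset.range (n + 1 - 1), 2 * a (n - (1 + i)) = 2 * a (n - 1 - i) := by
      intro i _
      have h : n - (1 + i) = n - 1 - i := by omega
      rw [h]
    rw [Finset.sum_congr rfl this]
    have := Finset.sum_range_reflect (fun j => 2 * a j) n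
    simp only [Nat.add_sub_cancel] at this ⊢
    rw [this, Finset.mul_sum]
  have key : ∀ n : ℕ, 0 < a n ∧ (∑ j ∈ Finset.range n, a j) < a n ∧ 2 * a n < a (n + 1) := by
    intro n
    induction n with
    | zero =>
      have h1 := hrec 1 le_rfl
      rw [hS 1] at h1
      simp [h0] at h1 ⊢
      linarith
    | succ n ih =>
      obtain ⟨hpos, hsum, h2⟩ := ih
      have hpos1 : 0 < a (n + 1) := by linarith
      have hsum1 : (∑ j ∈ Finset.range (n + 1), a j) < a (n + 1) := by
        rw [Finset.sum_range_succ]; linarith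
      refine ⟨hpos1, hsum1, ?_⟩
      have hr := hrec (n + 2) (by omega)
      rw [hS (n + 2)] at hr
      have hsum2 : (∑ j ∈ Finset.range (n + 2), a j) < 2 * a (n + 1) := by
        rw [Finset.sum_range_succ]; linarith
      have hr' : 6 * a (n + 1) - 2 * ∑ j ∈ Finset.range (n + 2), a j ≤ a (n + 2) := hr
      linarith
  have hstep : ∀ n : ℕ, 1 ≤ n → 2 * a (n - 1) < a n := by
    intro n hn
    obtain ⟨m, rfl⟩ := Nat.exists_eq_add_of_le hn
    rw [Nat.add_comm]
    simpa using (key m).2.2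
  have hpos : ∀ n, 0 < a n := fun n => (key n).1
  have hmono : StrictMono a := by
    apply strictMono_nat_of_lt_succ
    intro n
    have := (key n).2.2
    have := hpos n
    linarith
  refine ⟨hstep, hpos, hmono, ?_⟩
  have hpow : ∀ n, (2 : ℝ) ^ n ≤ a n := by
    intro n
    induction n with
    | zero => simp [h0]
    | succ n ih =>
      have := (key n).2.2
      have : 2 * (2 : ℝ) ^ n ≤ 2 * a n := by linarith
      rw [pow_succ]
      linarith [(key n).2.2]
  rintro ⟨M, hM⟩
  obtain ⟨n, hn⟩ := pow_unbounded_of_one_lt M (by norm_num : (1 : ℝ) < 2)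
  have := hM (Set.mem_range_self n)
  have := hpow n
  linarith
end
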